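/- Let G be a locally compact abelian Polish group with translation-invariant metric, T an ergodic automorphism of (X,μ), and Fₙ : X → G measurable with (Fₙ)_*μ → P weakly and Fₙ∘T - Fₙ → 0 in measure. Then for every continuous bounded φ on G (extending continuously to the one-point compactification), every measurable h : X → G, and every j ∈ L¹(μ): ∫ φ(Fₙ(x)+h(x)) j(x) dμ(x) → ∫∫ φ(g+h(x)) j(x) dP(g) dμ(x). -/

import Mathlib

set_option linter.unusedSectionVars false
set_option maxHeartbeats 1000000

open MeasureTheory Filter Function Topology Set BoundedContinuousFunction

lemma abs_sub_le3 (a b c d : ℝ) : |a - d| ≤ |a - b| + |b - c| + |c - d| := by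
  calc |a - d| ≤ |a - c| + |c - d| := abs_sub_le a c d
    _ ≤ |a - b| + |b - c| + |c - d| := by linarith [abs_sub_le a b c]

section MET


variable {X : Type*} [MeasurableSpace X] {μ : Measure X} [IsProbabilityMeasure μ]
  {T : X → X}

lemma Lp.coeFn_finset_sum {ι : Type*} (s : Finset ι) (f : ι → Lp ℝ 2 μ) :
    ⇑(∑ i ∈ s, f i) =ᵐ[μ] fun x => ∑ i ∈ s, f i x := by
  classical
  induction s using Finset.induction_on with
  | empty => simp only [Finset.sum_empty]; exact Lp.coeFn_zero (E := ℝ) (p := 2) (μ := μ)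
  | @insert a s hnot ih =>
    rw [Finset.sum_insert hnot]
    filter_upwards [Lp.coeFn_add (f a) (∑ i ∈ s, f i), ih] with x h1 h2
    rw [h1]
    simp only [Pi.add_apply, h2, Finset.sum_insert hnot]

lemma met_L2_aux (hT : Ergodic T μ) (bL : Lp ℝ 2 μ) :
    ∃ c : ℝ, Tendsto (fun m => eLpNorm (fun x => birkhoffAverage ℝ T (⇑bL) m x - c) 1 μ)
      atTop (𝓝 0) := by
  set U := (Lp.compMeasurePreservingₗᵢ (E := ℝ) (p := 2) ℝ T
    hT.toMeasurePreserving).toContinuousLinearMap with hUdef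
  have hU : ‖U‖ ≤ 1 := LinearIsometry.norm_toContinuousLinearMap_le _
  have hvn := U.tendsto_birkhoffAverage_orthogonalProjection hU bL
  set g : Lp ℝ 2 μ := (Submodule.orthogonalProjectionOnto (U.eqLocus (1 : Lp ℝ 2 μ →L[ℝ] Lp ℝ 2 μ)) bL : Lp ℝ 2 μ) with hgdef
  have hfixmem := (Submodule.orthogonalProjectionOnto (U.eqLocus (1 : Lp ℝ 2 μ →L[ℝ] Lp ℝ 2 μ)) bL).2
  rw [LinearMap.mem_eqLocus] at hfixmem
  have hfix : U g = g := hfixmem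
  have hcomp : ∀ (f : Lp ℝ 2 μ), ⇑(U f) =ᵐ[μ] (⇑f) ∘ T := fun f =>
    Lp.coeFn_compMeasurePreserving f hT.toMeasurePreserving
  have hinv : (⇑g) ∘ T =ᵐ[μ] ⇑g := by
    have := hcomp g
    rw [hfix] at this
    exact this.symm
  obtain ⟨c, hc⟩ := hT.quasiErgodic.ae_eq_const_of_ae_eq_comp_ae (Lp.aestronglyMeasurable g) hinv
  refine ⟨c, ?_⟩
  -- identify iterates
  have hiter : ∀ i : ℕ, ⇑(U^[i] bL) =ᵐ[μ] fun x => bL (T^[i] x) := by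
    intro i
    induction i with
    | zero => simp
    | succ i ih =>
      have h1 : ⇑(U^[i+1] bL) =ᵐ[μ] (⇑(U^[i] bL)) ∘ T := by
        rw [Function.iterate_succ_apply']
        exact hcomp _
      have h2 : (⇑(U^[i] bL)) ∘ T =ᵐ[μ] fun x => bL (T^[i] (T x)) :=
        hT.toMeasurePreserving.quasiMeasurePreserving.ae_eq ih
      refine h1.trans (h2.trans ?_)
      filter_upwards with x
      rw [← Function.iterate_succ_apply]
  have hbirk : ∀ m : ℕ, ⇑(birkhoffAverage ℝ U _root_.id m bL - g) =ᵐ[μ]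
      fun x => birkhoffAverage ℝ T (⇑bL) m x - c := by
    intro m
    have hsum : ⇑(∑ i ∈ Finset.range m, U^[i] bL) =ᵐ[μ]
        fun x => ∑ i ∈ Finset.range m, bL (T^[i] x) := by
      refine (Lp.coeFn_finset_sum _ _).trans ?_
      have : ∀ᵐ x ∂μ, ∀ i ∈ Finset.range m, (U^[i] bL) x = bL (T^[i] x) :=
        (ae_ball_iff (Finset.range m).countable_toSet).2 fun i _ => hiter i
      filter_upwards [this] with x hx
      exact Finset.sum_congr rfl hx
    have havg : ⇑(birkhoffAverage ℝ U _root_.id m bL) =ᵐ[μ]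
        fun x => birkhoffAverage ℝ T (⇑bL) m x := by
      have h1 : birkhoffAverage ℝ U _root_.id m bL
          = (m : ℝ)⁻¹ • ∑ i ∈ Finset.range m, U^[i] bL := rfl
      rw [h1]
      refine (Lp.coeFn_smul _ _).trans ?_
      filter_upwards [hsum] with x hx
      simp only [Pi.smul_apply, hx]
      rfl
    refine (Lp.coeFn_sub _ _).trans ?_
    filter_upwards [havg, hc] with x h1 h2
    simp [h1, h2]
  -- now squeeze
  have hnorm : Tendsto (fun m => ‖birkhoffAverage ℝ U _root_.id m bL - g‖) atTop (𝓝 0) :=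
    tendsto_iff_norm_sub_tendsto_zero.1 hvn
  have hofReal : Tendsto (fun m => ENNReal.ofReal ‖birkhoffAverage ℝ U _root_.id m bL - g‖)
      atTop (𝓝 0) := by
    simpa using ENNReal.tendsto_ofReal hnorm
  refine tendsto_of_tendsto_of_tendsto_of_le_of_le tendsto_const_nhds hofReal
    (fun m => zero_le) (fun m => ?_)
  have h1 : eLpNorm (fun x => birkhoffAverage ℝ T (⇑bL) m x - c) 1 μ
      ≤ eLpNorm (fun x => birkhoffAverage ℝ T (⇑bL) m x - c) 2 μ := by
    apply eLpNorm_le_eLpNorm_of_exponent_le (by norm_num)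
    exact ((Lp.aestronglyMeasurable _).congr (hbirk m)).congr (by rfl)
  refine h1.trans ?_
  rw [← eLpNorm_congr_ae (hbirk m), Lp.norm_def, ENNReal.ofReal_toReal (Lp.eLpNorm_ne_top _)]

section helpers

lemma mp_integral_comp (h : MeasurePreserving T μ μ) {g : X → ℝ}
    (hg : AEStronglyMeasurable g μ) : ∫ x, g (T x) ∂μ = ∫ x, g x ∂μ := by
  have := integral_map h.measurable.aemeasurable (f := g) (by rwa [h.map_eq])
  rw [h.map_eq] at this
  exact this.symm

lemma integrable_comp_iterate (h : MeasurePreserving T μ μ) {g : X → ℝ}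
    (hg : Integrable g μ) (i : ℕ) : Integrable (fun x => g (T^[i] x)) μ :=
  ((h.iterate i).integrable_comp hg.1).2 hg

lemma integrable_birkhoffAverage (h : MeasurePreserving T μ μ) {g : X → ℝ}
    (hg : Integrable g μ) (m : ℕ) :
    Integrable (fun x => birkhoffAverage ℝ T g m x) μ := by
  simp only [birkhoffAverage, birkhoffSum, smul_eq_mul]
  exact (integrable_finset_sum _ fun i _ => integrable_comp_iterate h hg i).const_mul _

lemma birkhoff_L1_contract (h : MeasurePreserving T μ μ) {w : X → ℝ}
    (hw : Integrable w μ) (m : ℕ) :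
    ∫ x, |birkhoffAverage ℝ T w m x| ∂μ ≤ ∫ x, |w x| ∂μ := by
  rcases Nat.eq_zero_or_pos m with rfl | hm
  · simp only [birkhoffAverage, birkhoffSum, Finset.range_zero, Finset.sum_empty, smul_zero,
      abs_zero, integral_zero]
    exact integral_nonneg fun x => abs_nonneg _
  have key : ∀ x, |birkhoffAverage ℝ T w m x|
      ≤ (m : ℝ)⁻¹ * ∑ i ∈ Finset.range m, |w (T^[i] x)| := by
    intro x
    rw [birkhoffAverage, smul_eq_mul, abs_mul, abs_inv, Nat.abs_cast]
    gcongr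
    exact Finset.abs_sum_le_sum_abs _ _
  calc ∫ x, |birkhoffAverage ℝ T w m x| ∂μ
      ≤ ∫ x, (m : ℝ)⁻¹ * ∑ i ∈ Finset.range m, |w (T^[i] x)| ∂μ := by
        refine integral_mono ((integrable_birkhoffAverage h hw m).abs) ?_ key
        exact (integrable_finset_sum _ fun i _ =>
          (integrable_comp_iterate h hw i).abs).const_mul _
    _ = (m : ℝ)⁻¹ * ∑ i ∈ Finset.range m, ∫ x, |w (T^[i] x)| ∂μ := by
        rw [integral_const_mul, integral_finset_sum _ fun i _ =>
          (integrable_comp_iterate h hw i).abs]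
    _ = (m : ℝ)⁻¹ * ∑ i ∈ Finset.range m, ∫ x, |w x| ∂μ := by
        congr 1
        refine Finset.sum_congr rfl fun i _ => ?_
        exact mp_integral_comp (h.iterate i) hw.abs.1
    _ = ∫ x, |w x| ∂μ := by
        rw [Finset.sum_const, Finset.card_range, nsmul_eq_mul]
        field_simp

lemma birkhoffAverage_sub_apply (T : X → X) (j b : X → ℝ) (m : ℕ) (x : X) :
    birkhoffAverage ℝ T j m x - birkhoffAverage ℝ T b m x
      = birkhoffAverage ℝ T (j - b) m x := by
  simp only [birkhoffAverage, birkhoffSum, Finset.sum_sub_distrib, smul_sub, Pi.sub_apply,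
    smul_eq_mul]
  ring

lemma integral_birkhoffAverage_eq (h : MeasurePreserving T μ μ) {g : X → ℝ}
    (hg : Integrable g μ) {m : ℕ} (hm : 0 < m) :
    ∫ x, birkhoffAverage ℝ T g m x ∂μ = ∫ x, g x ∂μ := by
  simp only [birkhoffAverage, birkhoffSum]
  rw [integral_smul, integral_finset_sum _ fun i _ => integrable_comp_iterate h hg i]
  have : ∀ i ∈ Finset.range m, ∫ x, g (T^[i] x) ∂μ = ∫ x, g x ∂μ := fun i _ =>
    mp_integral_comp (h.iterate i) hg.1
  rw [Finset.sum_congr rfl this, Finset.sum_const, Finset.card_range, nsmul_eq_mul,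
    smul_eq_mul, ← mul_assoc, inv_mul_cancel₀ (by exact_mod_cast hm.ne'), one_mul]

end helpers

lemma met_L2 (hT : Ergodic T μ) {b : X → ℝ} (hb : MemLp b 2 μ) :
    ∃ c : ℝ, Tendsto (fun m => ∫ x, |birkhoffAverage ℝ T b m x - c| ∂μ) atTop (𝓝 0) := by
  obtain ⟨c, hc⟩ := met_L2_aux hT (hb.toLp b)
  refine ⟨c, ?_⟩
  have hae : ∀ m : ℕ, (fun x => birkhoffAverage ℝ T (⇑(hb.toLp b)) m x - c)
      =ᵐ[μ] fun x => birkhoffAverage ℝ T b m x - c := by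
    intro m
    have h1 : ∀ i : ℕ, (fun x => (hb.toLp b : X → ℝ) (T^[i] x)) =ᵐ[μ] fun x => b (T^[i] x) :=
      fun i => (hT.toMeasurePreserving.iterate i).quasiMeasurePreserving.ae_eq hb.coeFn_toLp
    filter_upwards [ae_all_iff.2 h1] with x hx
    simp only [birkhoffAverage, birkhoffSum]
    congr 2
    exact Finset.sum_congr rfl fun i _ => hx i
  have hc' : Tendsto (fun m => eLpNorm (fun x => birkhoffAverage ℝ T b m x - c) 1 μ)
      atTop (𝓝 0) := by
    refine hc.congr fun m => ?_
    exact eLpNorm_congr_ae (hae m)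
  have hint : ∀ m : ℕ, Integrable (fun x => birkhoffAverage ℝ T b m x - c) μ :=
    fun m => (integrable_birkhoffAverage hT.toMeasurePreserving
      (hb.integrable one_le_two) m).sub (integrable_const c)
  have heq : ∀ m : ℕ, ∫ x, |birkhoffAverage ℝ T b m x - c| ∂μ
      = (eLpNorm (fun x => birkhoffAverage ℝ T b m x - c) 1 μ).toReal := by
    intro m
    rw [eLpNorm_one_eq_lintegral_enorm,
      ← ofReal_integral_norm_eq_lintegral_enorm (hint m), ENNReal.toReal_ofReal
        (integral_nonneg fun x => norm_nonneg _)]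
    simp [Real.norm_eq_abs]
  simp only [heq]
  have := (ENNReal.tendsto_toReal (by simp : (0:ENNReal) ≠ ⊤)).comp hc'
  simpa [Function.comp_def] using this

lemma met_L1 (hT : Ergodic T μ) {j : X → ℝ} (hj : Integrable j μ) {ε : ℝ} (hε : 0 < ε) :
    ∃ m : ℕ, 0 < m ∧ ∫ x, |birkhoffAverage ℝ T j m x - ∫ y, j y ∂μ| ∂μ < ε := by
  -- truncation
  set trunc : ℕ → X → ℝ := fun M x => max (min (j x) M) (-(M : ℝ)) with htrunc
  have htruncabs : ∀ (M : ℕ) (x : X), |j x - trunc M x| ≤ |j x| := by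
    intro M x
    show |j x - max (min (j x) M) (-(M:ℝ))| ≤ |j x|
    rcases le_total 0 (j x) with hy | hy
    · have h1 : (0:ℝ) ≤ min (j x) M := le_min hy (Nat.cast_nonneg M)
      have h2 : max (min (j x) M) (-(M:ℝ)) = min (j x) M :=
        max_eq_left (le_trans (neg_nonpos.2 (Nat.cast_nonneg M)) h1)
      rw [h2, abs_of_nonneg (by simp [sub_nonneg, min_le_left]), abs_of_nonneg hy]
      simp [h1]
    · have h1 : min (j x) M = j x := min_eq_left (le_trans hy (Nat.cast_nonneg M))
      rw [h1]
      have h2 : j x ≤ max (j x) (-(M:ℝ)) := le_max_left _ _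
      have h3 : max (j x) (-(M:ℝ)) ≤ 0 := max_le hy (neg_nonpos.2 (Nat.cast_nonneg M))
      rw [abs_of_nonpos (by linarith), abs_of_nonpos hy]
      simp
      linarith
  have htruncbdd : ∀ (M : ℕ) (x : X), |trunc M x| ≤ (M : ℝ) := by
    intro M x
    rw [abs_le]
    exact ⟨le_max_right _ _, max_le (le_trans (min_le_right _ _) le_rfl)
      (neg_le_self (Nat.cast_nonneg M))⟩
  have htruncmeas : ∀ M : ℕ, AEStronglyMeasurable (trunc M) μ := fun M =>
    (hj.1.inf aestronglyMeasurable_const).sup aestronglyMeasurable_const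
  have htruncint : ∀ M : ℕ, Integrable (trunc M) μ := fun M =>
    Integrable.mono' (integrable_const (M : ℝ)) (htruncmeas M)
      (Filter.Eventually.of_forall fun x => by
        simpa [Real.norm_eq_abs] using htruncbdd M x)
  have hDCT : Tendsto (fun M : ℕ => ∫ x, |j x - trunc M x| ∂μ) atTop (𝓝 0) := by
    have h0 : (0:ℝ) = ∫ (_ : X), (0:ℝ) ∂μ := by simp
    rw [h0]
    refine tendsto_integral_of_dominated_convergence (fun x => |j x|)
      (fun M => (hj.1.sub (htruncmeas M)).norm.congr ?_) hj.abs
      (fun M => Filter.Eventually.of_forall fun x => by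
        simpa [Real.norm_eq_abs, abs_abs] using htruncabs M x) ?_
    · filter_upwards with x
      simp [Real.norm_eq_abs]
    · filter_upwards with x
      have : ∀ᶠ M : ℕ in atTop, |j x - trunc M x| = 0 := by
        filter_upwards [eventually_ge_atTop ⌈|j x|⌉₊] with M hM
        have hMx : |j x| ≤ (M : ℝ) := le_trans (Nat.le_ceil _) (by exact_mod_cast hM)
        have h1 : min (j x) M = j x := min_eq_left (le_trans (le_abs_self _) hMx)
        have h2 : max (j x) (-(M:ℝ)) = j x :=
          max_eq_left (by rw [neg_le]; exact le_trans (neg_le_abs _) hMx)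
        simp [htrunc, h1, h2]
      exact Tendsto.congr' (this.mono fun M hM => hM.symm) tendsto_const_nhds
  obtain ⟨M, hM⟩ := (hDCT.eventually (gt_mem_nhds (by positivity : (0:ℝ) < ε/4))).exists
  set b : X → ℝ := trunc M with hb
  have hbmem : MemLp b 2 μ :=
    (memLp_top_of_bound (htruncmeas M) (M : ℝ)
      (Filter.Eventually.of_forall fun x => by
        simpa [Real.norm_eq_abs] using htruncbdd M x)).mono_exponent le_top
  obtain ⟨c, hc⟩ := met_L2 hT hbmem
  -- identify c with ∫ b
  have hcb : c = ∫ y, b y ∂μ := by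
    have h1 : Tendsto (fun m => ∫ x, birkhoffAverage ℝ T b m x ∂μ) atTop (𝓝 c) := by
      rw [show (c:ℝ) = c + 0 by ring]
      have h2 : Tendsto (fun m => ∫ x, birkhoffAverage ℝ T b m x ∂μ - c) atTop (𝓝 0) := by
        refine squeeze_zero_norm (fun m => ?_) hc
        rw [show (∫ x, birkhoffAverage ℝ T b m x ∂μ) - c
            = ∫ x, birkhoffAverage ℝ T b m x - c ∂μ by
          rw [integral_sub (integrable_birkhoffAverage hT.toMeasurePreserving
            (htruncint M) m) (integrable_const c)]; simp [hb]]
        exact (norm_integral_le_integral_norm _).trans (le_of_eq (by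
          simp [Real.norm_eq_abs]))
      simpa using h2.const_add c
    have h3 : Tendsto (fun m : ℕ => ∫ x, birkhoffAverage ℝ T b m x ∂μ) atTop
        (𝓝 (∫ y, b y ∂μ)) := by
      refine Tendsto.congr' ?_ (tendsto_const_nhds)
      filter_upwards [eventually_ge_atTop 1] with m hm
      exact (integral_birkhoffAverage_eq hT.toMeasurePreserving (htruncint M) hm).symm
    exact tendsto_nhds_unique h1 h3
  obtain ⟨m, hm, hmpos⟩ := ((hc.eventually (gt_mem_nhds (by positivity : (0:ℝ) < ε/4))).and
    (eventually_gt_atTop 0)).exists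
  refine ⟨m, hmpos, ?_⟩
  have hjb : Integrable (j - b) μ := hj.sub (htruncint M)
  have hint1 : Integrable (fun x => birkhoffAverage ℝ T (j - b) m x) μ :=
    integrable_birkhoffAverage hT.toMeasurePreserving hjb m
  have hint2 : Integrable (fun x => birkhoffAverage ℝ T b m x - c) μ :=
    (integrable_birkhoffAverage hT.toMeasurePreserving (htruncint M) m).sub (integrable_const _)
  have hptwise : ∀ x, |birkhoffAverage ℝ T j m x - ∫ y, j y ∂μ|
      ≤ |birkhoffAverage ℝ T (j - b) m x| + |birkhoffAverage ℝ T b m x - c|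
        + |c - ∫ y, j y ∂μ| := by
    intro x
    have := birkhoffAverage_sub_apply T j b m x
    calc |birkhoffAverage ℝ T j m x - ∫ y, j y ∂μ|
        = |(birkhoffAverage ℝ T (j-b) m x) + (birkhoffAverage ℝ T b m x - c)
            + (c - ∫ y, j y ∂μ)| := by rw [← this]; ring_nf
      _ ≤ _ := by
          refine (abs_add_le _ _).trans ?_
          gcongr
          exact abs_add_le _ _
  have hmain : ∫ x, |birkhoffAverage ℝ T j m x - ∫ y, j y ∂μ| ∂μ
      ≤ (∫ x, |birkhoffAverage ℝ T (j - b) m x| ∂μ)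
        + (∫ x, |birkhoffAverage ℝ T b m x - c| ∂μ) + |c - ∫ y, j y ∂μ| := by
    have hi : Integrable (fun x => |birkhoffAverage ℝ T (j - b) m x|
        + |birkhoffAverage ℝ T b m x - c| + |c - ∫ y, j y ∂μ|) μ :=
      (hint1.abs.add hint2.abs).add (integrable_const _)
    refine le_trans (integral_mono ?_ hi hptwise) ?_
    · exact ((integrable_birkhoffAverage hT.toMeasurePreserving hj m).sub
        (integrable_const _)).abs
    · have hAB : Integrable (fun x => |birkhoffAverage ℝ T (j - b) m x|
          + |birkhoffAverage ℝ T b m x - c|) μ := hint1.abs.add hint2.abs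
      rw [integral_add hAB (integrable_const _), integral_add hint1.abs hint2.abs]
      simp
  have hterm1 : ∫ x, |birkhoffAverage ℝ T (j - b) m x| ∂μ < ε/4 :=
    lt_of_le_of_lt (birkhoff_L1_contract hT.toMeasurePreserving hjb m)
      (by simpa using hM)
  have hterm3 : |c - ∫ y, j y ∂μ| < ε/4 := by
    rw [hcb, ← integral_sub (htruncint M) hj]
    calc |∫ x, b x - j x ∂μ| ≤ ∫ x, |b x - j x| ∂μ := by
          simpa [Real.norm_eq_abs] using norm_integral_le_integral_norm (fun x => b x - j x)
      _ = ∫ x, |j x - trunc M x| ∂μ := by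
          congr 1; funext x; rw [abs_sub_comm]
      _ < ε/4 := hM
  linarith


end MET



lemma uc_of_onePoint {G : Type*} [AddCommGroup G] [MetricSpace G]
    [IsTopologicalAddGroup G] [LocallyCompactSpace G]
    (hdist : ∀ a b c : G, dist (a + c) (b + c) = dist a b)
    (φ : C(OnePoint G, ℝ)) {ε : ℝ} (hε : 0 < ε) :
    ∃ δ > 0, ∀ a b : G, dist a b < δ →
      |φ (OnePoint.some a) - φ (OnePoint.some b)| ≤ ε := by
  classical
  set c : ℝ := φ OnePoint.infty with hcdef
  set V : Set (OnePoint G) := φ ⁻¹' (Metric.ball c (ε/2)) with hVdef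
  have hVopen : IsOpen V := φ.continuous.isOpen_preimage _ Metric.isOpen_ball
  have hVinfty : OnePoint.infty ∈ V := by
    simp [hVdef, Metric.mem_ball, hcdef]
    positivity
  set K : Set G := ((fun x : G => (OnePoint.some x : OnePoint G)) ⁻¹' V)ᶜ with hKdef
  have hK : IsCompact K := ((OnePoint.isOpen_iff_of_mem hVinfty).1 hVopen).2
  have hKout : ∀ x : G, x ∉ K → |φ (OnePoint.some x) - c| < ε/2 := by
    intro x hx
    have : (OnePoint.some x : OnePoint G) ∈ V := not_not.1 hx
    simpa [hVdef, Metric.mem_ball, Real.dist_eq] using this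
  obtain ⟨U, hUc, hU0⟩ := exists_compact_mem_nhds (0 : G)
  obtain ⟨δ₀, hδ₀, hballU⟩ := Metric.mem_nhds_iff.1 hU0
  set K' : Set G := (fun p : G × G => p.1 + p.2) '' (K ×ˢ U) with hK'def
  have hK' : IsCompact K' := (hK.prod hUc).image continuous_add
  have hsub : ∀ a k : G, k ∈ K → dist a k < δ₀ → a ∈ K' := by
    intro a k hk hd
    have h1 : dist (a - k) 0 = dist a k := by
      have := hdist (a - k) 0 k
      simpa using this.symm
    have h2 : a - k ∈ U := hballU (by simp [Metric.mem_ball, h1, hd])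
    exact ⟨(k, a - k), ⟨hk, h2⟩, by simp⟩
  have hKK' : K ⊆ K' := fun k hk => ⟨(k, 0), ⟨hk, mem_of_mem_nhds hU0⟩, by simp⟩
  have hψcont : Continuous fun g : G => φ (OnePoint.some g) :=
    φ.continuous.comp OnePoint.continuous_coe
  have huc : UniformContinuousOn (fun g : G => φ (OnePoint.some g)) K' :=
    hK'.uniformContinuousOn_of_continuous hψcont.continuousOn
  obtain ⟨δ₁, hδ₁, hucd⟩ := (Metric.uniformContinuousOn_iff).1 huc (ε/2) (by positivity)
  refine ⟨min δ₀ δ₁, lt_min hδ₀ hδ₁, fun a b hab => ?_⟩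
  by_cases ha : a ∈ K
  · have hbK' : b ∈ K' := hsub b a ha (by rw [dist_comm]; exact hab.trans_le (min_le_left _ _))
    have haK' : a ∈ K' := hKK' ha
    have := hucd a haK' b hbK' (hab.trans_le (min_le_right _ _))
    rw [Real.dist_eq] at this
    exact this.le.trans (by linarith)
  · by_cases hb : b ∈ K
    · have haK' : a ∈ K' := hsub a b hb (hab.trans_le (min_le_left _ _))
      have hbK' : b ∈ K' := hKK' hb
      have := hucd a haK' b hbK' (hab.trans_le (min_le_right _ _))
      rw [Real.dist_eq] at this
      exact this.le.trans (by linarith)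
    · have h1 := hKout a ha
      have h2 := hKout b hb
      calc |φ (OnePoint.some a) - φ (OnePoint.some b)|
          ≤ |φ (OnePoint.some a) - c| + |c - φ (OnePoint.some b)| := abs_sub_le _ _ _
        _ ≤ ε := by rw [abs_sub_comm c] at *; linarith




section core

variable {X : Type*} [MeasurableSpace X] {μ : Measure X} [IsProbabilityMeasure μ]
    {G : Type*} [MeasurableSpace G] [AddCommGroup G] [MetricSpace G]
    [IsTopologicalAddGroup G] [BorelSpace G] [PolishSpace G] [LocallyCompactSpace G]
    (hdist : ∀ a b c : G, dist (a + c) (b + c) = dist a b)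
    {T : X → X} (hTerg : Ergodic T μ)
    {F : ℕ → X → G} (hFmeas : ∀ n, Measurable (F n))
    (hinmeasure : TendstoInMeasure μ (fun n x => F n (T x) - F n x) atTop 0)

include hdist hTerg hFmeas hinmeasure in
lemma shift_lemma (ψ : G →ᵇ ℝ)
    (hψuc : ∀ ε : ℝ, 0 < ε → ∃ δ > 0, ∀ a b : G, dist a b < δ → |ψ a - ψ b| ≤ ε)
    {g : X → ℝ} (hg : Integrable g μ) :
    Tendsto (fun n => (∫ x, ψ (F n x) * g (T x) ∂μ) - ∫ x, ψ (F n x) * g x ∂μ)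
      atTop (𝓝 0) := by
  have hT : MeasurePreserving T μ μ := hTerg.toMeasurePreserving
  have hTm : Measurable T := hT.measurable
  have hψm : ∀ n, AEStronglyMeasurable (fun x => ψ (F n x)) μ := fun n =>
    (ψ.continuous.measurable.comp (hFmeas n)).aestronglyMeasurable
  set C : ℝ := ‖ψ‖ with hCdef
  have hC0 : 0 ≤ C := norm_nonneg _
  have hC : ∀ y : G, |ψ y| ≤ C := fun y => by
    simpa [Real.norm_eq_abs] using ψ.norm_coe_le_norm y
  have hgT : Integrable (fun x => g (T x)) μ := (hT.integrable_comp hg.1).2 hg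
  have hI1 : ∀ n, Integrable (fun x => ψ (F n x) * g (T x)) μ := fun n =>
    hgT.bdd_mul (hψm n) (Filter.Eventually.of_forall fun x => by simpa [Real.norm_eq_abs] using hC (F n x))
  have hI2 : ∀ n, Integrable (fun x => ψ (F n x) * g x) μ := fun n =>
    hg.bdd_mul (hψm n) (Filter.Eventually.of_forall fun x => by simpa [Real.norm_eq_abs] using hC (F n x))
  have hI3 : ∀ n, Integrable (fun x => ψ (F n (T x)) * g (T x)) μ := fun n =>
    (hT.integrable_comp ((hψm n).mul hg.1)).2 (hI2 n)
  -- rewrite difference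
  have hkey : ∀ n, (∫ x, ψ (F n x) * g (T x) ∂μ) - ∫ x, ψ (F n x) * g x ∂μ
      = ∫ x, (ψ (F n x) - ψ (F n (T x))) * g (T x) ∂μ := by
    intro n
    have h1 : ∫ x, ψ (F n x) * g x ∂μ = ∫ x, ψ (F n (T x)) * g (T x) ∂μ := by
      have := integral_map hTm.aemeasurable (f := fun y => ψ (F n y) * g y)
        (by rw [hT.map_eq]; exact (hψm n).mul hg.1)
      rw [hT.map_eq] at this
      simpa using this
    rw [h1, ← integral_sub (hI1 n) (hI3 n)]
    congr 1
    funext x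
    ring
  simp only [hkey]
  rw [NormedAddCommGroup.tendsto_nhds_zero]
  intro ε hε
  set Cg : ℝ := ∫ x, |g x| ∂μ with hCgdef
  have hCg0 : 0 ≤ Cg := integral_nonneg fun x => abs_nonneg _
  set ε' : ℝ := ε / (2 * (Cg + 1)) with hε'def
  have hε' : 0 < ε' := by positivity
  set ε₃ : ℝ := ε / (4 * (C + 1)) with hε₃def
  have hε₃ : 0 < ε₃ := by positivity
  obtain ⟨δ, hδ, hδψ⟩ := hψuc ε' hε'
  -- absolute continuity of the integral of |g ∘ T|
  have hfin : (∫⁻ x, ‖g (T x)‖ₑ ∂μ) ≠ ⊤ := hgT.2.ne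
  obtain ⟨δ₂, hδ₂, hδ₂i⟩ := exists_pos_setLIntegral_lt_of_measure_lt hfin
    (ENNReal.ofReal_pos.2 hε₃).ne'
  have hBmeas : ∀ n, MeasurableSet {x | δ ≤ dist (F n (T x) - F n x) 0} := by
    intro n
    have hm : Measurable fun x => dist (F n (T x) - F n x) 0 :=
      (continuous_id.dist continuous_const).measurable.comp
        (((hFmeas n).comp hTm).sub (hFmeas n))
    exact measurableSet_le measurable_const hm
  have hBsmall : ∀ᶠ n in atTop, μ {x | δ ≤ dist (F n (T x) - F n x) 0} < δ₂ := by
    have hset : ∀ n, {x | δ ≤ dist (F n (T x) - F n x) 0}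
        = {x | ENNReal.ofReal δ ≤ edist (F n (T x) - F n x) ((0 : X → G) x)} := by
      intro n; ext x
      simp only [Set.mem_setOf_eq, Pi.zero_apply, edist_dist]
      exact (ENNReal.ofReal_le_ofReal_iff dist_nonneg).symm
    simp only [hset]
    exact (hinmeasure (ENNReal.ofReal δ) (ENNReal.ofReal_pos.2 hδ)).eventually (gt_mem_nhds hδ₂)
  filter_upwards [hBsmall] with n hBn
  set B : Set X := {x | δ ≤ dist (F n (T x) - F n x) 0} with hBdef
  have hbound : ∀ x, |ψ (F n x) - ψ (F n (T x))| * |g (T x)|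
      ≤ ε' * |g (T x)| + B.indicator (fun x => (2*C) * |g (T x)|) x := by
    intro x
    by_cases hx : x ∈ B
    · rw [indicator_of_mem hx]
      have h1 : |ψ (F n x) - ψ (F n (T x))| ≤ 2 * C :=
        (abs_sub _ _).trans (by linarith [hC (F n x), hC (F n (T x))] :
          |ψ (F n x)| + |ψ (F n (T x))| ≤ 2*C)
      nlinarith [abs_nonneg (g (T x)), abs_nonneg (ψ (F n x) - ψ (F n (T x))), hε'.le]
    · rw [indicator_of_notMem hx, add_zero]
      have hxd : dist (F n (T x) - F n x) 0 < δ := lt_of_not_ge hx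
      have h2 : dist (F n x) (F n (T x)) < δ := by
        rw [dist_comm]
        calc dist (F n (T x)) (F n x) = dist (F n (T x) - F n x) 0 := by
              have := hdist (F n (T x) - F n x) 0 (F n x)
              simpa using this
          _ < δ := hxd
      have h3 : |ψ (F n x) - ψ (F n (T x))| ≤ ε' := hδψ _ _ h2
      exact mul_le_mul_of_nonneg_right h3 (abs_nonneg _)
  have hboundint : Integrable (fun x => ε' * |g (T x)|
      + B.indicator (fun x => (2*C) * |g (T x)|) x) μ :=
    (hgT.abs.const_mul _).add (((hgT.abs.const_mul (2*C)).indicator (hBmeas n)))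
  have hsetint : ∫ x in B, (2*C) * |g (T x)| ∂μ ≤ (2*C) * ε₃ := by
    rw [integral_const_mul]
    have h4 : ∫ x in B, |g (T x)| ∂μ ≤ ε₃ := by
      have h5 : ENNReal.ofReal (∫ x in B, ‖g (T x)‖ ∂μ)
          = ∫⁻ x in B, ‖g (T x)‖ₑ ∂μ :=
        ofReal_integral_norm_eq_lintegral_enorm (hgT.restrict)
      have h6 : (∫⁻ x in B, ‖g (T x)‖ₑ ∂μ) < ENNReal.ofReal ε₃ :=
        hδ₂i B hBn
      rw [← h5] at h6
      have h7 := (ENNReal.ofReal_lt_ofReal_iff hε₃).1 h6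
      simpa [Real.norm_eq_abs] using h7.le
    exact mul_le_mul_of_nonneg_left h4 (by linarith)
  calc ‖∫ x, (ψ (F n x) - ψ (F n (T x))) * g (T x) ∂μ‖
      ≤ ∫ x, |ψ (F n x) - ψ (F n (T x))| * |g (T x)| ∂μ := by
        have := norm_integral_le_integral_norm (μ := μ)
          fun x => (ψ (F n x) - ψ (F n (T x))) * g (T x)
        simpa [Real.norm_eq_abs, abs_mul] using this
    _ ≤ ∫ x, (ε' * |g (T x)| + B.indicator (fun x => (2*C) * |g (T x)|) x) ∂μ := by
        refine integral_mono ?_ hboundint hbound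
        have hI4 : Integrable (fun x => (ψ (F n x) - ψ (F n (T x))) * g (T x)) μ :=
          hgT.bdd_mul ((hψm n).sub
            (ψ.continuous.measurable.comp ((hFmeas n).comp hTm)).aestronglyMeasurable)
            (Filter.Eventually.of_forall fun x => by
              have := (abs_sub (ψ (F n x)) (ψ (F n (T x)))).trans
                (by linarith [hC (F n x), hC (F n (T x))] : |ψ (F n x)| + |ψ (F n (T x))| ≤ 2*C)
              simpa [Real.norm_eq_abs] using this)
        have := hI4.abs
        simpa [abs_mul] using this
    _ = ε' * Cg + ∫ x in B, (2*C) * |g (T x)| ∂μ := by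
        rw [integral_add ((hgT.abs.const_mul _))
          (((hgT.abs.const_mul (2*C)).indicator (hBmeas n))),
          integral_const_mul, integral_indicator (hBmeas n)]
        congr 2
        have := integral_map hTm.aemeasurable (f := fun y => |g y|)
          (by rw [hT.map_eq]
              exact hg.1.norm.congr (by filter_upwards with x using Real.norm_eq_abs _))
        rw [hT.map_eq] at this
        exact this.symm
    _ ≤ ε' * Cg + (2*C) * ε₃ := by linarith
    _ < ε := by
        rw [hε'def, hε₃def]
        have h8 : ε / (2 * (Cg + 1)) * Cg < ε / 2 := by
          rw [div_mul_eq_mul_div, div_lt_div_iff₀ (by positivity) (by norm_num)]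
          nlinarith
        have h9 : 2 * C * (ε / (4 * (C + 1))) < ε / 2 := by
          rw [mul_div_assoc', div_lt_div_iff₀ (by positivity) (by norm_num)]
          nlinarith
        linarith


include hdist hTerg hFmeas hinmeasure in
lemma iterate_lemma (ψ : G →ᵇ ℝ)
    (hψuc : ∀ ε : ℝ, 0 < ε → ∃ δ > 0, ∀ a b : G, dist a b < δ → |ψ a - ψ b| ≤ ε)
    {g : X → ℝ} (hg : Integrable g μ) (i : ℕ) :
    Tendsto (fun n => (∫ x, ψ (F n x) * g (T^[i] x) ∂μ) - ∫ x, ψ (F n x) * g x ∂μ)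
      atTop (𝓝 0) := by
  induction i with
  | zero => simpa using tendsto_const_nhds
  | succ i ih =>
    have hstep := shift_lemma hdist hTerg hFmeas hinmeasure ψ hψuc
      (g := fun x => g (T^[i] x))
      (integrable_comp_iterate hTerg.toMeasurePreserving hg i)
    have : (fun n => (∫ x, ψ (F n x) * g (T^[i+1] x) ∂μ) - ∫ x, ψ (F n x) * g x ∂μ)
        = fun n => ((∫ x, ψ (F n x) * g (T^[i] (T x)) ∂μ)
            - ∫ x, ψ (F n x) * g (T^[i] x) ∂μ)
          + ((∫ x, ψ (F n x) * g (T^[i] x) ∂μ) - ∫ x, ψ (F n x) * g x ∂μ) := by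
      funext n
      have hx : ∀ x, g (T^[i+1] x) = g (T^[i] (T x)) := fun x => by
        rw [Function.iterate_succ_apply]
      simp only [hx]
      ring
    rw [this]
    simpa using hstep.add ih

include hdist hTerg hFmeas hinmeasure in
lemma core_lemma (P : Measure G) [IsProbabilityMeasure P]
    (hweak : ∀ ψ : G →ᵇ ℝ,
      Tendsto (fun n => ∫ x, ψ (F n x) ∂μ) atTop (𝓝 (∫ y, ψ y ∂P)))
    (ψ : G →ᵇ ℝ)
    (hψuc : ∀ ε : ℝ, 0 < ε → ∃ δ > 0, ∀ a b : G, dist a b < δ → |ψ a - ψ b| ≤ ε)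
    {g : X → ℝ} (hg : Integrable g μ) :
    Tendsto (fun n => ∫ x, ψ (F n x) * g x ∂μ) atTop
      (𝓝 ((∫ y, ψ y ∂P) * ∫ x, g x ∂μ)) := by
  have hT : MeasurePreserving T μ μ := hTerg.toMeasurePreserving
  have hψm : ∀ n, AEStronglyMeasurable (fun x => ψ (F n x)) μ := fun n =>
    (ψ.continuous.measurable.comp (hFmeas n)).aestronglyMeasurable
  set C : ℝ := ‖ψ‖ with hCdef
  have hC0 : 0 ≤ C := norm_nonneg _
  have hC : ∀ y : G, |ψ y| ≤ C := fun y => by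
    simpa [Real.norm_eq_abs] using ψ.norm_coe_le_norm y
  have hbd : ∀ n, ∃ D, ∀ x, ‖ψ (F n x)‖ ≤ D := fun n =>
    ⟨C, fun x => by simpa [Real.norm_eq_abs] using hC (F n x)⟩
  set I : ℝ := ∫ x, g x ∂μ with hIdef
  rw [Metric.tendsto_nhds]
  intro ε hε
  set ε₁ : ℝ := ε / (4 * (C + 1)) with hε₁def
  have hε₁ : 0 < ε₁ := by positivity
  obtain ⟨m, hmpos, hm⟩ := met_L1 hTerg hg hε₁
  set A : X → ℝ := fun x => birkhoffAverage ℝ T g m x with hAdef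
  have hAint : Integrable A μ := integrable_birkhoffAverage hT hg m
  have hgi : ∀ i : ℕ, Integrable (fun x => g (T^[i] x)) μ := fun i =>
    integrable_comp_iterate hT hg i
  have hIψA : ∀ n, Integrable (fun x => ψ (F n x) * A x) μ := fun n =>
    hAint.bdd_mul (hψm n) (Filter.Eventually.of_forall (hbd n).choose_spec)
  have hIψg : ∀ n i, Integrable (fun x => ψ (F n x) * g (T^[i] x)) μ := fun n i =>
    (hgi i).bdd_mul (hψm n) (Filter.Eventually.of_forall (hbd n).choose_spec)
  have hIψg0 : ∀ n, Integrable (fun x => ψ (F n x) * g x) μ := fun n =>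
    hg.bdd_mul (hψm n) (Filter.Eventually.of_forall (hbd n).choose_spec)
  -- t1 : difference of a_n(A) and a_n(g) tends to zero
  have ht1 : Tendsto (fun n => (∫ x, ψ (F n x) * A x ∂μ) - ∫ x, ψ (F n x) * g x ∂μ)
      atTop (𝓝 0) := by
    have heq : ∀ n, (∫ x, ψ (F n x) * A x ∂μ) - ∫ x, ψ (F n x) * g x ∂μ
        = (m : ℝ)⁻¹ * ∑ i ∈ Finset.range m,
            ((∫ x, ψ (F n x) * g (T^[i] x) ∂μ) - ∫ x, ψ (F n x) * g x ∂μ) := by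
      intro n
      have h1 : ∫ x, ψ (F n x) * A x ∂μ
          = (m : ℝ)⁻¹ * ∑ i ∈ Finset.range m, ∫ x, ψ (F n x) * g (T^[i] x) ∂μ := by
        have h2 : (fun x => ψ (F n x) * A x)
            = fun x => (m : ℝ)⁻¹ * ∑ i ∈ Finset.range m, ψ (F n x) * g (T^[i] x) := by
          funext x
          rw [hAdef]
          simp only [birkhoffAverage, birkhoffSum, smul_eq_mul, Finset.mul_sum]
          exact Finset.sum_congr rfl fun i _ => by ring
        rw [h2, integral_const_mul, integral_finset_sum _ fun i _ => hIψg n i]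
      rw [h1, Finset.sum_sub_distrib, Finset.sum_const, Finset.card_range, nsmul_eq_mul,
        mul_sub, ← mul_assoc, inv_mul_cancel₀ (by exact_mod_cast hmpos.ne' : (m:ℝ) ≠ 0),
        one_mul]
    have hsum : Tendsto (fun n => ∑ i ∈ Finset.range m,
        ((∫ x, ψ (F n x) * g (T^[i] x) ∂μ) - ∫ x, ψ (F n x) * g x ∂μ)) atTop (𝓝 0) := by
      have := tendsto_finset_sum (Finset.range m) fun i _ =>
        iterate_lemma hdist hTerg hFmeas hinmeasure ψ hψuc hg i
      simpa using this
    have := hsum.const_mul ((m : ℝ)⁻¹)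
    simp only [mul_zero] at this
    exact Tendsto.congr (fun n => (heq n).symm) this
  -- t2 : uniform bound
  have ht2 : ∀ n, |(∫ x, ψ (F n x) * A x ∂μ) - (∫ x, ψ (F n x) ∂μ) * I| ≤ C * ε₁ := by
    intro n
    have hIψ : Integrable (fun x => ψ (F n x)) μ :=
      (integrable_const C).mono' (hψm n) (Filter.Eventually.of_forall fun x => by
        simpa [Real.norm_eq_abs] using hC (F n x))
    have h1 : (∫ x, ψ (F n x) ∂μ) * I = ∫ x, ψ (F n x) * I ∂μ := by
      rw [integral_mul_const]
    rw [h1, ← integral_sub (hIψA n) (hIψ.mul_const I)]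
    have h2 : ∀ x, |ψ (F n x) * A x - ψ (F n x) * I| ≤ C * |A x - I| := by
      intro x
      rw [← mul_sub, abs_mul]
      exact mul_le_mul_of_nonneg_right (hC _) (abs_nonneg _)
    calc |∫ x, ψ (F n x) * A x - ψ (F n x) * I ∂μ|
        ≤ ∫ x, |ψ (F n x) * A x - ψ (F n x) * I| ∂μ := by
          simpa [Real.norm_eq_abs] using norm_integral_le_integral_norm
            fun x => ψ (F n x) * A x - ψ (F n x) * I
      _ ≤ ∫ x, C * |A x - I| ∂μ := by
          refine integral_mono (((hIψA n).sub (hIψ.mul_const I)).abs) ?_ h2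
          exact (hAint.sub (integrable_const I)).abs.const_mul C
      _ = C * ∫ x, |A x - I| ∂μ := integral_const_mul _ _
      _ ≤ C * ε₁ := mul_le_mul_of_nonneg_left hm.le hC0
  -- t3 : weak convergence term
  have ht3 : Tendsto (fun n => (∫ x, ψ (F n x) ∂μ) * I) atTop
      (𝓝 ((∫ y, ψ y ∂P) * I)) := (hweak ψ).mul_const I
  have hCε₁ : C * ε₁ < ε / 2 := by
    rw [hε₁def, mul_div_assoc']
    rw [div_lt_div_iff₀ (by positivity) (by norm_num)]
    nlinarith
  have h4 := ht1.eventually (Metric.ball_mem_nhds 0 (by positivity : (0:ℝ) < ε/4))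
  have h5 := ht3.eventually (Metric.ball_mem_nhds _ (by positivity : (0:ℝ) < ε/4))
  filter_upwards [h4, h5] with n hn4 hn5
  rw [Real.dist_eq, sub_zero] at hn4
  rw [Real.dist_eq] at hn5
  rw [Real.dist_eq]
  have hkey : (∫ x, ψ (F n x) * g x ∂μ) - (∫ y, ψ y ∂P) * I
      = -((∫ x, ψ (F n x) * A x ∂μ) - ∫ x, ψ (F n x) * g x ∂μ)
        + ((∫ x, ψ (F n x) * A x ∂μ) - (∫ x, ψ (F n x) ∂μ) * I)
        + ((∫ x, ψ (F n x) ∂μ) * I - (∫ y, ψ y ∂P) * I) := by ring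
  rw [hkey]
  have := ht2 n
  calc |_ + _ + _| ≤ |-((∫ x, ψ (F n x) * A x ∂μ) - ∫ x, ψ (F n x) * g x ∂μ)
        + ((∫ x, ψ (F n x) * A x ∂μ) - (∫ x, ψ (F n x) ∂μ) * I)|
        + |(∫ x, ψ (F n x) ∂μ) * I - (∫ y, ψ y ∂P) * I| := abs_add_le _ _
    _ ≤ |(∫ x, ψ (F n x) * A x ∂μ) - ∫ x, ψ (F n x) * g x ∂μ|
        + |(∫ x, ψ (F n x) * A x ∂μ) - (∫ x, ψ (F n x) ∂μ) * I|
        + |(∫ x, ψ (F n x) ∂μ) * I - (∫ y, ψ y ∂P) * I| := by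
          have := abs_add_le (-((∫ x, ψ (F n x) * A x ∂μ) - ∫ x, ψ (F n x) * g x ∂μ))
            ((∫ x, ψ (F n x) * A x ∂μ) - (∫ x, ψ (F n x) ∂μ) * I)
          rw [abs_neg] at this
          linarith
    _ < ε := by linarith

lemma simple_decomp {G : Type*} {X : Type*} [MeasurableSpace X] (s : SimpleFunc X G)
    (f : G → X → ℝ) (x : X) :
    f (s x) x = ∑ c ∈ s.range, (s ⁻¹' {c}).indicator (fun y => f c y) x := by
  classical
  rw [Finset.sum_eq_single_of_mem (s x) (s.mem_range_self x)]
  · exact (indicator_of_mem (show x ∈ s ⁻¹' {s x} from rfl) _).symm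
  · intro c _ hne
    exact indicator_of_notMem (fun hx => hne (by simpa using hx.symm)) _

include hdist hTerg hFmeas hinmeasure in
lemma simple_case (P : Measure G) [IsProbabilityMeasure P]
    (hweak : ∀ ψ : G →ᵇ ℝ,
      Tendsto (fun n => ∫ x, ψ (F n x) ∂μ) atTop (𝓝 (∫ y, ψ y ∂P)))
    (φ : C(OnePoint G, ℝ)) {j : X → ℝ} (hj : Integrable j μ) (s : SimpleFunc X G) :
    Tendsto (fun n => ∫ x, φ (OnePoint.some (F n x + s x)) * j x ∂μ) atTop
      (𝓝 (∫ x, (∫ g, φ (OnePoint.some (g + s x)) ∂P) * j x ∂μ)) := by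
  classical
  set Cφ : ℝ := ‖mkOfCompact φ‖ with hCφdef
  have hCφ : ∀ z, |φ z| ≤ Cφ := fun z => by
    simpa [Real.norm_eq_abs, hCφdef] using (mkOfCompact φ).norm_coe_le_norm z
  have hcont : ∀ c : G, Continuous fun a : G => φ (OnePoint.some (a + c)) := fun c =>
    φ.continuous.comp (OnePoint.continuous_coe.comp (continuous_add_right c))
  set ψ : G → (G →ᵇ ℝ) := fun c => BoundedContinuousFunction.ofNormedAddCommGroup
    (fun a => φ (OnePoint.some (a + c))) (hcont c) Cφ
    (fun a => by simpa [Real.norm_eq_abs] using hCφ (OnePoint.some (a + c))) with hψdef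
  have hψapp : ∀ c a : G, ψ c a = φ (OnePoint.some (a + c)) := fun c a => rfl
  have hψuc : ∀ c : G, ∀ ε : ℝ, 0 < ε → ∃ δ > 0, ∀ a b : G, dist a b < δ →
      |ψ c a - ψ c b| ≤ ε := by
    intro c ε hε
    obtain ⟨δ, hδ, hd⟩ := uc_of_onePoint hdist φ hε
    refine ⟨δ, hδ, fun a b hab => ?_⟩
    rw [hψapp, hψapp]
    exact hd (a + c) (b + c) (by rwa [hdist])
  have hfib : ∀ c : G, MeasurableSet (s ⁻¹' {c}) := fun c => s.measurableSet_fiber c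
  have hjc : ∀ c : G, Integrable ((s ⁻¹' {c}).indicator j) μ := fun c =>
    hj.indicator (hfib c)
  have hψm : ∀ (c : G) (n : ℕ), AEStronglyMeasurable (fun x => ψ c (F n x)) μ := fun c n =>
    ((ψ c).continuous.measurable.comp (hFmeas n)).aestronglyMeasurable
  have hbd : ∀ (c : G) (n : ℕ), ∃ D, ∀ x, ‖ψ c (F n x)‖ ≤ D := fun c n =>
    ⟨Cφ, fun x => by simpa [Real.norm_eq_abs, hψapp] using hCφ (OnePoint.some (F n x + c))⟩
  -- decomposition of the left-hand side
  have hAn : ∀ n, ∫ x, φ (OnePoint.some (F n x + s x)) * j x ∂μ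
      = ∑ c ∈ s.range, ∫ x, ψ c (F n x) * ((s ⁻¹' {c}).indicator j x) ∂μ := by
    intro n
    have h1 : (fun x => φ (OnePoint.some (F n x + s x)) * j x)
        = fun x => ∑ c ∈ s.range,
            (s ⁻¹' {c}).indicator (fun y => φ (OnePoint.some (F n y + c)) * j y) x := by
      funext x
      exact simple_decomp s (fun c y => φ (OnePoint.some (F n y + c)) * j y) x
    rw [h1, integral_finset_sum]
    · refine Finset.sum_congr rfl fun c _ => ?_
      congr 1
      funext x
      rw [indicator_mul_right]
      rfl
    · intro c _
      have h2 : ((s ⁻¹' {c}).indicator (fun y => φ (OnePoint.some (F n y + c)) * j y))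
          = fun x => ψ c (F n x) * ((s ⁻¹' {c}).indicator j x) := by
        funext x
        rw [indicator_mul_right]
        rfl
      rw [h2]
      exact (hjc c).bdd_mul (hψm c n) (Filter.Eventually.of_forall (hbd c n).choose_spec)
  -- decomposition of the limit
  have hLn : ∫ x, (∫ g, φ (OnePoint.some (g + s x)) ∂P) * j x ∂μ
      = ∑ c ∈ s.range, (∫ y, ψ c y ∂P) * ∫ x, (s ⁻¹' {c}).indicator j x ∂μ := by
    have h1 : (fun x => (∫ g, φ (OnePoint.some (g + s x)) ∂P) * j x)
        = fun x => ∑ c ∈ s.range,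
            (s ⁻¹' {c}).indicator
              (fun y => (∫ g, φ (OnePoint.some (g + c)) ∂P) * j y) x := by
      funext x
      exact simple_decomp s (fun c y => (∫ g, φ (OnePoint.some (g + c)) ∂P) * j y) x
    rw [h1, integral_finset_sum]
    · refine Finset.sum_congr rfl fun c _ => ?_
      have h2 : ((s ⁻¹' {c}).indicator
            (fun y => (∫ g, φ (OnePoint.some (g + c)) ∂P) * j y))
          = fun x => (∫ g, φ (OnePoint.some (g + c)) ∂P) * ((s ⁻¹' {c}).indicator j x) := by
        funext x
        rw [indicator_const_mul]
      rw [h2, integral_const_mul]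
      congr 1
    · intro c _
      have h2 : ((s ⁻¹' {c}).indicator
            (fun y => (∫ g, φ (OnePoint.some (g + c)) ∂P) * j y))
          = fun x => (∫ g, φ (OnePoint.some (g + c)) ∂P) * ((s ⁻¹' {c}).indicator j x) := by
        funext x
        rw [indicator_const_mul]
      rw [h2]
      exact (hjc c).const_mul _
  rw [hLn]
  have := tendsto_finset_sum s.range (fun c _ =>
    core_lemma hdist hTerg hFmeas hinmeasure P hweak (ψ c) (hψuc c) (hjc c))
  refine Tendsto.congr (fun n => (hAn n).symm) this

end core

/-- Generalization of Lemma 4.1 of Frączek–Lemańczyk: if `T` is ergodic,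
`(Fₙ)_* μ → P` weakly and `Fₙ ∘ T - Fₙ → 0` in measure, then for every continuous `φ`
on the one-point compactification of `G`, every measurable `h : X → G` and `j ∈ L¹(μ)`,
`∫ φ(Fₙ(x) + h(x)) j(x) dμ → ∫∫ φ(g + h(x)) j(x) dP(g) dμ(x)`. -/
theorem stmt6 {X : Type*} [MeasurableSpace X] (μ : Measure X) [IsProbabilityMeasure μ]
    {G : Type*} [MeasurableSpace G] [AddCommGroup G] [MetricSpace G]
    [IsTopologicalAddGroup G] [BorelSpace G] [PolishSpace G] [LocallyCompactSpace G]
    (hdist : ∀ a b c : G, dist (a + c) (b + c) = dist a b)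
    (T : X → X) (hTerg : Ergodic T μ)
    (F : ℕ → X → G) (hFmeas : ∀ n, Measurable (F n))
    (P : Measure G) [IsProbabilityMeasure P]
    (hweak : ∀ ψ : G →ᵇ ℝ,
      Tendsto (fun n => ∫ x, ψ (F n x) ∂μ) atTop (nhds (∫ g, ψ g ∂P)))
    (hinmeasure : TendstoInMeasure μ (fun n x => F n (T x) - F n x) atTop 0)
    (φ : C(OnePoint G, ℝ))
    (h : X → G) (hh : Measurable h)
    (j : X → ℝ) (hj : Integrable j μ) :
    Tendsto (fun n => ∫ x, φ (OnePoint.some (F n x + h x)) * j x ∂μ) atTop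
      (nhds (∫ x, (∫ g, φ (OnePoint.some (g + h x)) * j x ∂P) ∂μ)) := by
  classical
  set Cφ : ℝ := ‖mkOfCompact φ‖ with hCφdef
  have hCφ0 : 0 ≤ Cφ := norm_nonneg _
  have hCφ : ∀ z, |φ z| ≤ Cφ := fun z => by
    simpa [Real.norm_eq_abs, hCφdef] using (mkOfCompact φ).norm_coe_le_norm z
  have hcontr : ∀ c : G, Continuous fun a : G => φ (OnePoint.some (a + c)) := fun c =>
    φ.continuous.comp (OnePoint.continuous_coe.comp (continuous_add_right c))
  have hcontl : ∀ a : G, Continuous fun c : G => φ (OnePoint.some (a + c)) := fun a =>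
    φ.continuous.comp (OnePoint.continuous_coe.comp (continuous_add_left a))
  have hinner_meas : ∀ c : G, AEStronglyMeasurable (fun a : G => φ (OnePoint.some (a + c))) P :=
    fun c => (hcontr c).measurable.aestronglyMeasurable
  set w : G → ℝ := fun c => ∫ g, φ (OnePoint.some (g + c)) ∂P with hwdef
  have hwcont : Continuous w := by
    refine continuous_of_dominated hinner_meas
      (fun c => Filter.Eventually.of_forall fun a => ?_) (integrable_const Cφ)
      (Filter.Eventually.of_forall fun a => hcontl a)
    simpa [Real.norm_eq_abs] using hCφ (OnePoint.some (a + c))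
  have hwbdd : ∀ c : G, |w c| ≤ Cφ := by
    intro c
    have := norm_integral_le_of_norm_le_const (μ := P)
      (f := fun a : G => φ (OnePoint.some (a + c))) (C := Cφ)
      (Filter.Eventually.of_forall fun a => by
        simpa [Real.norm_eq_abs] using hCφ (OnePoint.some (a + c)))
    simpa [Real.norm_eq_abs] using this
  have hRHS : ∫ x, (∫ g, φ (OnePoint.some (g + h x)) * j x ∂P) ∂μ
      = ∫ x, w (h x) * j x ∂μ := by
    congr 1
    funext x
    rw [integral_mul_const]
  rw [hRHS]
  -- approximating simple functions
  set sk : ℕ → SimpleFunc X G := fun k =>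
    SimpleFunc.approxOn h hh Set.univ 0 (Set.mem_univ 0) k with hskdef
  have hsk : ∀ x, Tendsto (fun k => sk k x) atTop (𝓝 (h x)) := fun x =>
    SimpleFunc.tendsto_approxOn hh (Set.mem_univ 0) (by simp)
  have hsimple : ∀ k, Tendsto (fun n => ∫ x, φ (OnePoint.some (F n x + sk k x)) * j x ∂μ)
      atTop (𝓝 (∫ x, w (sk k x) * j x ∂μ)) := fun k =>
    simple_case hdist hTerg hFmeas hinmeasure P hweak φ hj (sk k)
  -- integrability facts
  have haddmeas : ∀ (n : ℕ) (v : X → G), Measurable v →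
      AEStronglyMeasurable (fun x => φ (OnePoint.some (F n x + v x))) μ := fun n v hv =>
    (((φ.continuous.comp OnePoint.continuous_coe).measurable).comp
      ((hFmeas n).add hv)).aestronglyMeasurable
  have hIn : ∀ (n : ℕ) (v : X → G), Measurable v →
      Integrable (fun x => φ (OnePoint.some (F n x + v x)) * j x) μ := fun n v hv =>
    hj.bdd_mul (haddmeas n v hv) (Filter.Eventually.of_forall fun x => by
      simpa [Real.norm_eq_abs] using hCφ (OnePoint.some (F n x + v x)))
  have hIw : ∀ (v : X → G), Measurable v → Integrable (fun x => w (v x) * j x) μ :=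
    fun v hv => hj.bdd_mul ((hwcont.measurable.comp hv).aestronglyMeasurable)
      (Filter.Eventually.of_forall fun x => by simpa [Real.norm_eq_abs] using hwbdd (v x))
  -- epsilon argument
  rw [Metric.tendsto_nhds]
  intro ε hε
  set Cj : ℝ := ∫ x, |j x| ∂μ with hCjdef
  have hCj0 : 0 ≤ Cj := integral_nonneg fun x => abs_nonneg _
  set ε' : ℝ := ε / (8 * (Cj + 1)) with hε'def
  have hε' : 0 < ε' := by positivity
  obtain ⟨δ, hδ, hd⟩ := uc_of_onePoint hdist φ hε'
  set B : ℕ → Set X := fun k => {x | δ ≤ dist (h x) (sk k x)} with hBdef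
  have hBmeas : ∀ k, MeasurableSet (B k) :=
    fun k => measurableSet_le measurable_const (hh.dist (sk k).measurable)
  set d : ℕ → ℝ := fun k => ∫ x, (B k).indicator (fun y => |j y|) x ∂μ with hddef
  have hd0 : Tendsto d atTop (𝓝 0) := by
    have h0 : (0:ℝ) = ∫ (_ : X), (0:ℝ) ∂μ := by simp
    rw [hddef, h0]
    refine tendsto_integral_of_dominated_convergence (fun x => |j x|)
      (fun k => (hj.abs.1.indicator (hBmeas k)))
      hj.abs (fun k => Filter.Eventually.of_forall fun x => ?_)
      (Filter.Eventually.of_forall fun x => ?_)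
    · rw [Real.norm_eq_abs]
      by_cases hx : x ∈ B k
      · rw [indicator_of_mem hx, abs_abs]
      · rw [indicator_of_notMem hx, abs_zero]
        exact abs_nonneg _
    · have hdist0 : Tendsto (fun k => dist (h x) (sk k x)) atTop (𝓝 0) := by
        simpa using (tendsto_const_nhds : Tendsto (fun _ : ℕ => h x) atTop (𝓝 (h x))).dist (hsk x)
      have : ∀ᶠ k in atTop, (B k).indicator (fun y => |j y|) x = 0 := by
        filter_upwards [hdist0.eventually (gt_mem_nhds hδ)] with k hk
        exact indicator_of_notMem (by simpa [hBdef] using not_le.2 hk) _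
      exact Tendsto.congr' (this.mono fun k hk => hk.symm) tendsto_const_nhds
  obtain ⟨K, hK⟩ := (hd0.eventually (gt_mem_nhds
    (by positivity : (0:ℝ) < ε / (8 * (Cφ + 1))))).exists
  have hdK0 : 0 ≤ d K := integral_nonneg fun x => indicator_nonneg (fun y _ => abs_nonneg _) _
  -- pointwise comparison bounds
  have hptw : ∀ (q q' : ℝ), |q| ≤ Cφ → |q'| ≤ Cφ → |q - q'| ≤ 2 * Cφ := fun q q' h1 h2 =>
    (abs_sub _ _).trans (by linarith)
  -- key1 : integrand comparison for the F-side
  have key1 : ∀ n, |(∫ x, φ (OnePoint.some (F n x + h x)) * j x ∂μ)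
      - ∫ x, φ (OnePoint.some (F n x + sk K x)) * j x ∂μ| ≤ ε' * Cj + 2 * Cφ * d K := by
    intro n
    rw [← integral_sub (hIn n h hh) (hIn n (sk K) (sk K).measurable)]
    have hpt : ∀ x, |φ (OnePoint.some (F n x + h x)) * j x
        - φ (OnePoint.some (F n x + sk K x)) * j x|
        ≤ ε' * |j x| + (B K).indicator (fun y => 2 * Cφ * |j y|) x := by
      intro x
      have heq : φ (OnePoint.some (F n x + h x)) * j x
          - φ (OnePoint.some (F n x + sk K x)) * j x
          = (φ (OnePoint.some (F n x + h x)) - φ (OnePoint.some (F n x + sk K x))) * j x := by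
        ring
      rw [heq, abs_mul]
      by_cases hx : x ∈ B K
      · rw [indicator_of_mem hx]
        have := hptw _ _ (hCφ (OnePoint.some (F n x + h x)))
          (hCφ (OnePoint.some (F n x + sk K x)))
        nlinarith [abs_nonneg (j x), hε'.le,
          abs_nonneg (φ (OnePoint.some (F n x + h x)) - φ (OnePoint.some (F n x + sk K x)))]
      · rw [indicator_of_notMem hx, add_zero]
        have hxd : dist (h x) (sk K x) < δ := lt_of_not_ge hx
        have h2 : dist (F n x + h x) (F n x + sk K x) < δ := by
          rw [add_comm (F n x) (h x), add_comm (F n x) (sk K x), hdist]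
          exact hxd
        exact mul_le_mul_of_nonneg_right (hd _ _ h2) (abs_nonneg _)
    calc |∫ x, φ (OnePoint.some (F n x + h x)) * j x
            - φ (OnePoint.some (F n x + sk K x)) * j x ∂μ|
        ≤ ∫ x, |φ (OnePoint.some (F n x + h x)) * j x
            - φ (OnePoint.some (F n x + sk K x)) * j x| ∂μ := by
          simpa [Real.norm_eq_abs] using norm_integral_le_integral_norm
            fun x => φ (OnePoint.some (F n x + h x)) * j x
              - φ (OnePoint.some (F n x + sk K x)) * j x
      _ ≤ ∫ x, (ε' * |j x| + (B K).indicator (fun y => 2 * Cφ * |j y|) x) ∂μ := by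
          refine integral_mono ((hIn n h hh).sub (hIn n (sk K) (sk K).measurable)).abs
            ?_ hpt
          exact (hj.abs.const_mul _).add ((hj.abs.const_mul _).indicator (hBmeas K))
      _ = ε' * Cj + 2 * Cφ * d K := by
          have hind : ∫ x, (B K).indicator (fun y => 2 * Cφ * |j y|) x ∂μ
              = 2 * Cφ * d K := by
            rw [show d K = ∫ x, (B K).indicator (fun y => |j y|) x ∂μ from rfl,
              ← integral_const_mul]
            congr 1
            funext x
            exact indicator_const_mul _ _ _ _
          rw [integral_add (hj.abs.const_mul _) ((hj.abs.const_mul _).indicator (hBmeas K)),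
            integral_const_mul, hind, hCjdef]
  -- key2 : comparison for the limit side
  have key2 : |(∫ x, w (h x) * j x ∂μ) - ∫ x, w (sk K x) * j x ∂μ|
      ≤ ε' * Cj + 2 * Cφ * d K := by
    rw [← integral_sub (hIw h hh) (hIw (sk K) (sk K).measurable)]
    have hpt : ∀ x, |w (h x) * j x - w (sk K x) * j x|
        ≤ ε' * |j x| + (B K).indicator (fun y => 2 * Cφ * |j y|) x := by
      intro x
      have heq : w (h x) * j x - w (sk K x) * j x = (w (h x) - w (sk K x)) * j x := by ring
      rw [heq, abs_mul]
      by_cases hx : x ∈ B K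
      · rw [indicator_of_mem hx]
        have := hptw _ _ (hwbdd (h x)) (hwbdd (sk K x))
        nlinarith [abs_nonneg (j x), hε'.le, abs_nonneg (w (h x) - w (sk K x))]
      · rw [indicator_of_notMem hx, add_zero]
        have hxd : dist (h x) (sk K x) < δ := lt_of_not_ge hx
        have hwd : |w (h x) - w (sk K x)| ≤ ε' := by
          have hi1 : Integrable (fun a : G => φ (OnePoint.some (a + h x))) P :=
            (integrable_const Cφ).mono' (hinner_meas (h x))
              (Filter.Eventually.of_forall fun a => by
                simpa [Real.norm_eq_abs] using hCφ (OnePoint.some (a + h x)))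
          have hi2 : Integrable (fun a : G => φ (OnePoint.some (a + sk K x))) P :=
            (integrable_const Cφ).mono' (hinner_meas (sk K x))
              (Filter.Eventually.of_forall fun a => by
                simpa [Real.norm_eq_abs] using hCφ (OnePoint.some (a + sk K x)))
          show |(∫ g, φ (OnePoint.some (g + h x)) ∂P)
              - ∫ g, φ (OnePoint.some (g + sk K x)) ∂P| ≤ ε'
          rw [← integral_sub hi1 hi2]
          have := norm_integral_le_of_norm_le_const (μ := P)
            (f := fun a : G => φ (OnePoint.some (a + h x))
              - φ (OnePoint.some (a + sk K x))) (C := ε')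
            (Filter.Eventually.of_forall fun a => by
              have h2 : dist (a + h x) (a + sk K x) < δ := by
                rw [add_comm a (h x), add_comm a (sk K x), hdist]
                exact hxd
              simpa [Real.norm_eq_abs] using hd _ _ h2)
          simpa [Real.norm_eq_abs] using this
        exact mul_le_mul_of_nonneg_right hwd (abs_nonneg _)
    calc |∫ x, w (h x) * j x - w (sk K x) * j x ∂μ|
        ≤ ∫ x, |w (h x) * j x - w (sk K x) * j x| ∂μ := by
          simpa [Real.norm_eq_abs] using norm_integral_le_integral_norm
            fun x => w (h x) * j x - w (sk K x) * j x
      _ ≤ ∫ x, (ε' * |j x| + (B K).indicator (fun y => 2 * Cφ * |j y|) x) ∂μ := by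
          refine integral_mono ((hIw h hh).sub (hIw (sk K) (sk K).measurable)).abs ?_ hpt
          exact (hj.abs.const_mul _).add ((hj.abs.const_mul _).indicator (hBmeas K))
      _ = ε' * Cj + 2 * Cφ * d K := by
          have hind : ∫ x, (B K).indicator (fun y => 2 * Cφ * |j y|) x ∂μ
              = 2 * Cφ * d K := by
            rw [show d K = ∫ x, (B K).indicator (fun y => |j y|) x ∂μ from rfl,
              ← integral_const_mul]
            congr 1
            funext x
            exact indicator_const_mul _ _ _ _
          rw [integral_add (hj.abs.const_mul _) ((hj.abs.const_mul _).indicator (hBmeas K)),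
            integral_const_mul, hind, hCjdef]
  -- numeric bounds
  have hb1 : ε' * Cj < ε / 8 := by
    rw [hε'def, div_mul_eq_mul_div, div_lt_div_iff₀ (by positivity) (by norm_num)]
    nlinarith
  have hb2 : 2 * Cφ * d K < ε / 4 := by
    have h1 : 2 * Cφ * d K ≤ 2 * Cφ * (ε / (8 * (Cφ + 1))) := by
      exact mul_le_mul_of_nonneg_left hK.le (by positivity)
    have h2 : 2 * Cφ * (ε / (8 * (Cφ + 1))) < ε / 4 := by
      rw [mul_div_assoc', div_lt_div_iff₀ (by positivity) (by norm_num)]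
      nlinarith
    linarith
  have hev := (hsimple K).eventually (Metric.ball_mem_nhds _
    (by positivity : (0:ℝ) < ε / 8))
  filter_upwards [hev] with n hn
  rw [Real.dist_eq] at hn ⊢
  have k1 := key1 n
  calc |(∫ x, φ (OnePoint.some (F n x + h x)) * j x ∂μ) - ∫ x, w (h x) * j x ∂μ|
      ≤ |(∫ x, φ (OnePoint.some (F n x + h x)) * j x ∂μ)
          - ∫ x, φ (OnePoint.some (F n x + sk K x)) * j x ∂μ|
        + |(∫ x, φ (OnePoint.some (F n x + sk K x)) * j x ∂μ)
          - ∫ x, w (sk K x) * j x ∂μ|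
        + |(∫ x, w (sk K x) * j x ∂μ) - ∫ x, w (h x) * j x ∂μ| := abs_sub_le3 _ _ _ _
    _ < ε := by
        rw [abs_sub_comm] at key2
        linarith [hn]
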